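/- Let p and q be probability distributions on k elements with non-increasingly ordered entries such that p ≻ q, and let δ ≥ 0. Then the flattest δ-approximations satisfy p̲^(δ) ≻ q̲^(δ). -/

import Mathlib

open Finset

noncomputable section

/-- The ℓ¹ distance `‖a − b‖ = Σᵢ |aᵢ − bᵢ|` between two vectors in `ℝ^k`. -/
def l1dist {k : ℕ} (a b : Fin k → ℝ) : ℝ := ∑ i, |a i - b i|

/-- A probability distribution on `k` elements: nonnegative entries summing to 1. -/
def IsProbDist {k : ℕ} (p : Fin k → ℝ) : Prop := (∀ i, 0 ≤ p i) ∧ ∑ i, p i = 1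

/-- The vector `a` rearranged in non-increasing order, `a↓`. -/
def descSort {k : ℕ} (a : Fin k → ℝ) : Fin k → ℝ := fun i => a (Tuple.sort a i.rev)

/-- The sum of the first `l` entries of `a` (1-based indexing: entries `1,…,l`). -/
def psum {k : ℕ} (a : Fin k → ℝ) (l : ℕ) : ℝ :=
  ∑ i ∈ univ.filter (fun i : Fin k => (i : ℕ) < l), a i

/-- The sum of the entries of `a` from position `l` to `k` (1-based indexing). -/
def tailSum {k : ℕ} (a : Fin k → ℝ) (l : ℕ) : ℝ :=
  ∑ i ∈ univ.filter (fun i : Fin k => l ≤ (i : ℕ) + 1), a i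

/-- `a` majorizes `b` (`a ≻ b`): the total sums agree and all partial sums of the
non-increasing rearrangements satisfy `Σ_{i=1}^l a↓ᵢ ≥ Σ_{i=1}^l b↓ᵢ` for `l = 1,…,k`. -/
def Majorizes {k : ℕ} (a b : Fin k → ℝ) : Prop :=
  (∑ i, a i = ∑ i, b i) ∧
  ∀ l : ℕ, 1 ≤ l → l ≤ k → psum (descSort b) l ≤ psum (descSort a) l

/-- The distribution `e₁ = (1,0,…,0)`. -/
def e1 (k : ℕ) : Fin k → ℝ := fun i => if (i : ℕ) = 0 then 1 else 0

/-- The uniform distribution `η = (1/k,…,1/k)`. -/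
def unif (k : ℕ) : Fin k → ℝ := fun _ => (k : ℝ)⁻¹

/-- The unnormalised vector `r` in the construction of the steepest approximation:
`r₁ = p₁ + δ/2`, `rᵢ = pᵢ` otherwise. -/
def steepR {k : ℕ} (δ : ℝ) (p : Fin k → ℝ) : Fin k → ℝ :=
  fun i => if (i : ℕ) = 0 then p i + δ / 2 else p i

/-- `lstar ∈ {1,…,k}` is the truncation index of the steepest `δ`-approximation of `p`:
`Σ_{i=1}^{l*} rᵢ ≤ 1 < Σ_{i=1}^{l*+1} rᵢ` (the second sum being meaningful for `l* < k`). -/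
def IsTruncIdx {k : ℕ} (δ : ℝ) (p : Fin k → ℝ) (lstar : ℕ) : Prop :=
  1 ≤ lstar ∧ lstar ≤ k ∧ psum (steepR δ p) lstar ≤ 1 ∧
    (lstar < k → 1 < psum (steepR δ p) (lstar + 1))

/-- `pbar` is the steepest `δ`-approximation `p̄^(δ)` of `p` (assumed non-increasingly
ordered): if `‖p − e₁‖ ≤ δ` then `pbar = e₁`; otherwise `pbar` agrees with `r` on the
first `l*` entries, has `1 − Σ_{i=1}^{l*} rᵢ` at position `l*+1`, and `0` afterwards. -/
def IsSteepest {k : ℕ} (δ : ℝ) (p pbar : Fin k → ℝ) : Prop :=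
  (l1dist p (e1 k) ≤ δ ∧ pbar = e1 k) ∨
  (δ < l1dist p (e1 k) ∧ ∃ lstar : ℕ, IsTruncIdx δ p lstar ∧
    ∀ i : Fin k, pbar i =
      if (i : ℕ) < lstar then steepR δ p i
      else if (i : ℕ) = lstar then 1 - psum (steepR δ p) lstar
      else 0)

/-- `ε(x) = Σ_{i : pᵢ ≥ x} (pᵢ − x)`. -/
def epsFn {k : ℕ} (p : Fin k → ℝ) (x : ℝ) : ℝ :=
  ∑ i ∈ univ.filter (fun i : Fin k => x ≤ p i), (p i - x)

/-- `γ(y) = Σ_{i : pᵢ ≤ y} (y − pᵢ)`. -/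
def gammaFn {k : ℕ} (p : Fin k → ℝ) (y : ℝ) : ℝ :=
  ∑ i ∈ univ.filter (fun i : Fin k => p i ≤ y), (y - p i)

/-- `pflat` is the flattest `δ`-approximation of `p` built from the cutting level `x*` and
the filling level `y*`: `x*, y* ∈ [0,1]`, `ε(x*) = γ(y*) = δ/2`, and `pflat` equals `x*`
where `pᵢ ≥ x*`, equals `y*` where `pᵢ ≤ y*`, and equals `pᵢ` otherwise. -/
def IsFlattestWith {k : ℕ} (δ : ℝ) (p pflat : Fin k → ℝ) (x y : ℝ) : Prop :=
  x ∈ Set.Icc (0 : ℝ) 1 ∧ y ∈ Set.Icc (0 : ℝ) 1 ∧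
  epsFn p x = δ / 2 ∧ gammaFn p y = δ / 2 ∧
  ∀ i : Fin k, pflat i = if x ≤ p i then x else if p i ≤ y then y else p i

/-- `pflat` is the flattest `δ`-approximation `p̲^(δ)` of `p` (assumed non-increasingly
ordered): if `‖p − η‖ ≤ δ` then `pflat = η`; otherwise it is obtained by cutting at
level `x*` and filling at level `y*`. -/
def IsFlattest {k : ℕ} (δ : ℝ) (p pflat : Fin k → ℝ) : Prop :=
  (l1dist p (unif k) ≤ δ ∧ pflat = unif k) ∨
  (δ < l1dist p (unif k) ∧ ∃ x y : ℝ, IsFlattestWith δ p pflat x y)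

end

-- ======================= auxiliary lemmas =======================

lemma FPM.descSort_eq_self {k : ℕ} {a : Fin k → ℝ} (ha : Antitone a) : descSort a = a := by
  have hmono : Monotone (a ∘ (Fin.revPerm : Equiv.Perm (Fin k))) := by
    intro i j hij
    exact ha (by simpa using Fin.rev_le_rev.mpr hij)
  have h := Tuple.comp_sort_eq_comp_iff_monotone.mpr hmono
  funext i
  have h2 := congrFun h i.rev
  simp only [Function.comp_apply, Fin.revPerm_apply, Fin.rev_rev] at h2
  simpa [descSort] using h2.symm

lemma FPM.card_filter_lt {k l : ℕ} (hl : l ≤ k) :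
    (univ.filter (fun i : Fin k => (i : ℕ) < l)).card = l := by
  have h1 : (univ.filter (fun i : Fin k => (i : ℕ) < l)).image Fin.val = Finset.range l := by
    ext n
    simp only [Finset.mem_image, Finset.mem_filter, Finset.mem_univ, true_and, Finset.mem_range]
    constructor
    · rintro ⟨i, hi, rfl⟩; exact hi
    · intro hn; exact ⟨⟨n, lt_of_lt_of_le hn hl⟩, hn, rfl⟩
  have h2 := Finset.card_image_of_injective
    (univ.filter (fun i : Fin k => (i : ℕ) < l)) Fin.val_injective
  rw [h1, Finset.card_range] at h2
  omega

lemma FPM.card_filter_and {k l m : ℕ} (hm : m ≤ k) :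
    (univ.filter (fun i : Fin k => l ≤ (i : ℕ) ∧ (i : ℕ) < m)).card = m - l := by
  have h1 : (univ.filter (fun i : Fin k => l ≤ (i : ℕ) ∧ (i : ℕ) < m)).image Fin.val
      = Finset.Ico l m := by
    ext n
    simp only [Finset.mem_image, Finset.mem_filter, Finset.mem_univ, true_and, Finset.mem_Ico]
    constructor
    · rintro ⟨i, hi, rfl⟩; exact hi
    · intro hn; exact ⟨⟨n, lt_of_lt_of_le hn.2 hm⟩, hn, rfl⟩
  have h2 := Finset.card_image_of_injective
    (univ.filter (fun i : Fin k => l ≤ (i : ℕ) ∧ (i : ℕ) < m)) Fin.val_injective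
  rw [h1, Nat.card_Ico] at h2
  omega

lemma FPM.card_filter_le {k l : ℕ} (hl : l ≤ k) :
    (univ.filter (fun i : Fin k => l ≤ (i : ℕ))).card = k - l := by
  have h : (univ.filter (fun i : Fin k => l ≤ (i : ℕ)))
      = univ.filter (fun i : Fin k => l ≤ (i : ℕ) ∧ (i : ℕ) < k) := by
    ext i; simp [i.isLt]
  rw [h, FPM.card_filter_and le_rfl]

lemma FPM.psum_zero {k : ℕ} (a : Fin k → ℝ) : psum a 0 = 0 := by
  simp [psum]

lemma FPM.psum_k {k : ℕ} (a : Fin k → ℝ) : psum a k = ∑ i, a i := by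
  unfold psum; congr 1; ext i; simp [i.isLt]

lemma FPM.psum_split {k : ℕ} (a : Fin k → ℝ) {l m : ℕ} (h : l ≤ m) :
    psum a m = psum a l + ∑ i ∈ univ.filter (fun i : Fin k => l ≤ (i : ℕ) ∧ (i : ℕ) < m), a i := by
  unfold psum
  rw [← Finset.sum_union]
  · congr 1; ext i; simp; omega
  · rw [Finset.disjoint_filter]; intro i _ h1 h2; omega

lemma FPM.isum_le {k : ℕ} {a : Fin k → ℝ} (ha : Antitone a) {l m : ℕ} (hm : m ≤ k)
    {j : Fin k} (hj : ∀ i : Fin k, l ≤ (i : ℕ) → j ≤ i) :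
    ∑ i ∈ univ.filter (fun i : Fin k => l ≤ (i : ℕ) ∧ (i : ℕ) < m), a i
      ≤ ((m - l : ℕ) : ℝ) * a j := by
  rw [← FPM.card_filter_and (k := k) (l := l) (m := m) hm, ← nsmul_eq_mul]
  apply Finset.sum_le_card_nsmul
  intro i hi
  simp only [Finset.mem_filter] at hi
  exact ha (hj i hi.2.1)

lemma FPM.le_isum {k : ℕ} {a : Fin k → ℝ} (ha : Antitone a) {l m : ℕ} (hm : m ≤ k)
    {j : Fin k} (hj : ∀ i : Fin k, (i : ℕ) < m → i ≤ j) :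
    ((m - l : ℕ) : ℝ) * a j
      ≤ ∑ i ∈ univ.filter (fun i : Fin k => l ≤ (i : ℕ) ∧ (i : ℕ) < m), a i := by
  rw [← FPM.card_filter_and (k := k) (l := l) (m := m) hm, ← nsmul_eq_mul]
  apply Finset.card_nsmul_le_sum
  intro i hi
  simp only [Finset.mem_filter] at hi
  exact ha (hj i hi.2.2)

lemma FPM.concave_chord_zero {k : ℕ} {a : Fin k → ℝ} (ha : Antitone a) {l m : ℕ}
    (hlm : l ≤ m) (hmk : m ≤ k) : (l : ℝ) * psum a m ≤ (m : ℝ) * psum a l := by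
  rcases Nat.eq_zero_or_pos l with rfl | hl
  · simp [psum]
  · have hlk : l - 1 < k := by omega
    set j : Fin k := ⟨l - 1, hlk⟩
    have h1 : ((l - 0 : ℕ) : ℝ) * a j ≤ psum a l := by
      have h := FPM.le_isum ha (le_trans hlm hmk) (l := 0) (m := l) (j := j)
        (fun i hi => by simp only [j, Fin.le_def]; omega)
      calc ((l - 0:ℕ):ℝ) * a j ≤ _ := h
        _ = psum a l := by rw [FPM.psum_split a (Nat.zero_le l), psum]; simp
    have h2 : ∑ i ∈ univ.filter (fun i : Fin k => l ≤ (i : ℕ) ∧ (i : ℕ) < m), a i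
        ≤ ((m - l : ℕ) : ℝ) * a j :=
      FPM.isum_le ha hmk (fun i hi => by simp only [j, Fin.le_def]; omega)
    have h3 := FPM.psum_split a hlm
    have hc1 : ((l - 0 : ℕ) : ℝ) = (l : ℝ) := by norm_num
    have hc2 : ((m - l : ℕ) : ℝ) = (m : ℝ) - l := by push_cast [hlm]; ring
    rw [hc1] at h1; rw [hc2] at h2
    have hl' : (0:ℝ) < l := by exact_mod_cast hl
    have hml' : (0:ℝ) ≤ (m:ℝ) - l := by
      have : (l:ℝ) ≤ m := by exact_mod_cast hlm
      linarith
    nlinarith [h1, h2, h3]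

lemma FPM.concave_chord_k {k : ℕ} {a : Fin k → ℝ} (ha : Antitone a) {l m : ℕ}
    (hml : m ≤ l) (hlk : l ≤ k) :
    ((k : ℝ) - l) * psum a m + ((l : ℝ) - m) * psum a k ≤ ((k : ℝ) - m) * psum a l := by
  rcases Nat.eq_or_lt_of_le hml with rfl | hml'
  · ring_nf; rfl
  · have hlk' : l - 1 < k := by omega
    set j : Fin k := ⟨l - 1, hlk'⟩
    have h1 : ((l - m : ℕ) : ℝ) * a j
        ≤ ∑ i ∈ univ.filter (fun i : Fin k => m ≤ (i : ℕ) ∧ (i : ℕ) < l), a i :=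
      FPM.le_isum ha hlk (fun i hi => by simp only [j, Fin.le_def]; omega)
    have h2 : ∑ i ∈ univ.filter (fun i : Fin k => l ≤ (i : ℕ) ∧ (i : ℕ) < k), a i
        ≤ ((k - l : ℕ) : ℝ) * a j :=
      FPM.isum_le ha le_rfl (fun i hi => by simp only [j, Fin.le_def]; omega)
    have h3 := FPM.psum_split a hml
    have h4 := FPM.psum_split a hlk
    have hc1 : ((l - m : ℕ) : ℝ) = (l : ℝ) - m := by push_cast [hml]; ring
    have hc2 : ((k - l : ℕ) : ℝ) = (k : ℝ) - l := by push_cast [hlk]; ring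
    rw [hc1] at h1; rw [hc2] at h2
    have e1 : (0:ℝ) < (l:ℝ) - m := by
      have : (m:ℝ) < l := by exact_mod_cast hml'
      linarith
    have e2 : (0:ℝ) ≤ (k:ℝ) - l := by
      have : (l:ℝ) ≤ k := by exact_mod_cast hlk
      linarith
    nlinarith [h1, h2, h3, h4]

lemma FPM.epsFn_eq_sum_max {k : ℕ} (p : Fin k → ℝ) (x : ℝ) :
    epsFn p x = ∑ i, max (p i - x) 0 := by
  rw [epsFn, Finset.sum_filter]
  congr 1; funext i
  rcases le_or_gt x (p i) with h | h
  · simp [h, max_eq_left (by linarith : (0:ℝ) ≤ p i - x)]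
  · simp [not_le.mpr h, max_eq_right (by linarith : p i - x ≤ (0:ℝ))]

lemma FPM.gammaFn_eq_sum_max {k : ℕ} (p : Fin k → ℝ) (y : ℝ) :
    gammaFn p y = ∑ i, max (y - p i) 0 := by
  rw [gammaFn, Finset.sum_filter]
  congr 1; funext i
  rcases le_or_gt (p i) y with h | h
  · simp [h, max_eq_left (by linarith : (0:ℝ) ≤ y - p i)]
  · simp [not_le.mpr h, max_eq_right (by linarith : y - p i ≤ (0:ℝ))]

lemma FPM.epsFn_antitone {k : ℕ} (p : Fin k → ℝ) : Antitone (epsFn p) := by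
  intro x y hxy
  rw [FPM.epsFn_eq_sum_max, FPM.epsFn_eq_sum_max]
  exact Finset.sum_le_sum (fun i _ => max_le_max (by linarith) le_rfl)

lemma FPM.gammaFn_monotone {k : ℕ} (p : Fin k → ℝ) : Monotone (gammaFn p) := by
  intro x y hxy
  rw [FPM.gammaFn_eq_sum_max, FPM.gammaFn_eq_sum_max]
  exact Finset.sum_le_sum (fun i _ => max_le_max (by linarith) le_rfl)

lemma FPM.l1dist_unif {k : ℕ} (p : Fin k → ℝ) :
    l1dist p (unif k) = epsFn p (k : ℝ)⁻¹ + gammaFn p (k : ℝ)⁻¹ := by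
  rw [FPM.epsFn_eq_sum_max, FPM.gammaFn_eq_sum_max, l1dist, ← Finset.sum_add_distrib]
  congr 1; funext i
  rcases le_or_gt ((k:ℝ)⁻¹) (p i) with h | h
  · rw [abs_of_nonneg (by simpa [unif] using sub_nonneg.mpr h)]
    simp only [unif]
    rw [max_eq_left (by linarith), max_eq_right (by linarith)]
    ring
  · rw [abs_of_nonpos (by simp only [unif]; linarith)]
    simp only [unif]
    rw [max_eq_right (by linarith), max_eq_left (by linarith)]
    ring

lemma FPM.eps_eq_gamma_at_unif {k : ℕ} (p : Fin k → ℝ) (hk : 1 ≤ k) (hsum : ∑ i, p i = 1) :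
    epsFn p (k : ℝ)⁻¹ = gammaFn p (k : ℝ)⁻¹ := by
  have key : epsFn p (k:ℝ)⁻¹ - gammaFn p (k:ℝ)⁻¹ = ∑ i, (p i - (k:ℝ)⁻¹) := by
    rw [FPM.epsFn_eq_sum_max, FPM.gammaFn_eq_sum_max, ← Finset.sum_sub_distrib]
    congr 1; funext i
    rcases le_or_gt ((k:ℝ)⁻¹) (p i) with h | h
    · rw [max_eq_left (by linarith), max_eq_right (by linarith)]; ring
    · rw [max_eq_right (by linarith), max_eq_left (by linarith)]; ring
  have hk' : (k:ℝ) ≠ 0 := by positivity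
  have h0 : ∑ i, (p i - (k:ℝ)⁻¹) = 0 := by
    rw [Finset.sum_sub_distrib, hsum, Finset.sum_const, Finset.card_univ, Fintype.card_fin]
    rw [nsmul_eq_mul, mul_inv_cancel₀ hk', sub_self]
  linarith [key, h0]

lemma FPM.mem_lower_iff {k : ℕ} (S : Finset (Fin k))
    (hS : ∀ i j : Fin k, i ≤ j → j ∈ S → i ∈ S) (i : Fin k) :
    i ∈ S ↔ (i : ℕ) < S.card := by
  constructor
  · intro hi
    have hsub : Finset.Iic i ⊆ S := fun j hj => hS j i (Finset.mem_Iic.mp hj) hi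
    have h := Finset.card_le_card hsub
    rw [Fin.card_Iic] at h
    omega
  · intro hi
    by_contra hns
    have hsub : S ⊆ Finset.Iio i := by
      intro j hj
      rw [Finset.mem_Iio]
      rcases lt_or_ge j i with h | h
      · exact h
      · exact absurd (hS i j h hj) hns
    have h := Finset.card_le_card hsub
    rw [Fin.card_Iio] at h
    omega

section FPMfacts
open FPM
variable {k : ℕ} {δ : ℝ} {q qflat : Fin k → ℝ} {x y : ℝ}

lemma FPM.k_pos_of_lt_l1dist (hδ : 0 ≤ δ) (hne : δ < l1dist q (unif k)) : 1 ≤ k := by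
  by_contra h
  have hk0 : k = 0 := by omega
  subst hk0
  rw [l1dist] at hne
  simp at hne
  linarith

lemma FPM.y_lt_x (hδ : 0 ≤ δ) (hsum : ∑ i, q i = 1) (hne : δ < l1dist q (unif k))
    (hfw : IsFlattestWith δ q qflat x y) : y < (k : ℝ)⁻¹ ∧ (k : ℝ)⁻¹ < x := by
  have hk := FPM.k_pos_of_lt_l1dist hδ hne
  obtain ⟨hx01, hy01, hex, hgy, hform⟩ := hfw
  have heg := FPM.eps_eq_gamma_at_unif q hk hsum
  have hld := FPM.l1dist_unif q
  have heps : δ / 2 < epsFn q (k:ℝ)⁻¹ := by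
    rw [hld, ← heg] at hne; linarith
  have hgam : δ / 2 < gammaFn q (k:ℝ)⁻¹ := by
    rw [hld, heg] at hne; linarith
  constructor
  · by_contra h
    push_neg at h
    have := FPM.gammaFn_monotone q h
    rw [hgy] at this
    linarith
  · by_contra h
    push_neg at h
    have := FPM.epsFn_antitone q h
    rw [hex] at this
    linarith

lemma FPM.flat_min_max (hyx : y < x)
    (hform : ∀ i, qflat i = if x ≤ q i then x else if q i ≤ y then y else q i) :
    ∀ i, qflat i = min x (max y (q i)) := by
  intro i
  rw [hform i]
  rcases le_or_gt x (q i) with h | h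
  · rw [if_pos h, max_eq_right (by linarith), min_eq_left (by linarith)]
  · rw [if_neg (not_le.mpr h)]
    rcases le_or_gt (q i) y with h2 | h2
    · rw [if_pos h2, max_eq_left h2, min_eq_right (by linarith)]
    · rw [if_neg (not_le.mpr h2), max_eq_right (by linarith), min_eq_right (by linarith)]

lemma FPM.flat_antitone (hqa : Antitone q) (hyx : y < x)
    (hform : ∀ i, qflat i = if x ≤ q i then x else if q i ≤ y then y else q i) :
    Antitone qflat := by
  intro i j hij
  rw [FPM.flat_min_max hyx hform, FPM.flat_min_max hyx hform]
  exact min_le_min le_rfl (max_le_max le_rfl (hqa hij))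

lemma FPM.flat_sum (hyx : y < x) (hsum : ∑ i, q i = 1)
    (hex : epsFn q x = δ / 2) (hgy : gammaFn q y = δ / 2)
    (hform : ∀ i, qflat i = if x ≤ q i then x else if q i ≤ y then y else q i) :
    ∑ i, qflat i = 1 := by
  have key : ∑ i, (qflat i - q i)
      = ∑ i, ((if x ≤ q i then x - q i else 0) + (if q i ≤ y then y - q i else 0)) := by
    congr 1; funext i
    rw [hform i]
    rcases le_or_gt x (q i) with h | h
    · rw [if_pos h, if_pos h, if_neg (by push_neg; linarith)]; ring
    · rw [if_neg (not_le.mpr h), if_neg (not_le.mpr h)]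
      rcases le_or_gt (q i) y with h2 | h2
      · rw [if_pos h2, if_pos h2]; ring
      · rw [if_neg (not_le.mpr h2), if_neg (not_le.mpr h2)]; ring
  rw [Finset.sum_add_distrib] at key
  have e1 : ∑ i, (if x ≤ q i then x - q i else 0) = -epsFn q x := by
    rw [epsFn, Finset.sum_filter, ← Finset.sum_neg_distrib]
    congr 1; funext i
    rcases le_or_gt x (q i) with h | h
    · rw [if_pos h, if_pos h]; ring
    · rw [if_neg (not_le.mpr h), if_neg (not_le.mpr h)]; ring
  have e2 : ∑ i, (if q i ≤ y then y - q i else 0) = gammaFn q y := by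
    rw [gammaFn, Finset.sum_filter]
  rw [e1, e2, hex, hgy] at key
  have h0 : ∑ i, (qflat i - q i) = 0 := by rw [key]; ring
  rw [Finset.sum_sub_distrib, hsum] at h0
  linarith

lemma FPM.psum_flat_lower (hex : epsFn q x = δ / 2)
    (hform : ∀ i, qflat i = if x ≤ q i then x else if q i ≤ y then y else q i)
    (l : ℕ) : psum q l - δ / 2 ≤ psum qflat l := by
  have h1 : psum q l - psum qflat l
      = ∑ i ∈ univ.filter (fun i : Fin k => (i : ℕ) < l), (q i - qflat i) := by
    rw [psum, psum, Finset.sum_sub_distrib]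
  have h2 : ∑ i ∈ univ.filter (fun i : Fin k => (i : ℕ) < l), (q i - qflat i)
      ≤ ∑ i ∈ univ.filter (fun i : Fin k => (i : ℕ) < l), max (q i - x) 0 := by
    apply Finset.sum_le_sum
    intro i _
    rw [hform i]
    rcases le_or_gt x (q i) with h | h
    · rw [if_pos h]; exact le_max_left _ _
    · rw [if_neg (not_le.mpr h)]
      rcases le_or_gt (q i) y with h2 | h2
      · rw [if_pos h2]
        exact le_trans (by linarith) (le_max_right (q i - x) 0)
      · rw [if_neg (not_le.mpr h2)]
        simpa using le_max_right (q i - x) 0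
  have h3 : ∑ i ∈ univ.filter (fun i : Fin k => (i : ℕ) < l), max (q i - x) 0
      ≤ ∑ i, max (q i - x) 0 :=
    Finset.sum_le_sum_of_subset_of_nonneg (Finset.filter_subset _ _)
      (fun i _ _ => le_max_right _ _)
  rw [← FPM.epsFn_eq_sum_max, hex] at h3
  linarith

lemma FPM.flat_regions (hqa : Antitone q) (hyx : y < x)
    (hsumflat : ∑ i, qflat i = 1)
    (hex : epsFn q x = δ / 2)
    (hform : ∀ i, qflat i = if x ≤ q i then x else if q i ≤ y then y else q i) :
    ∃ m1 m2 : ℕ, m1 ≤ m2 ∧ m2 ≤ k ∧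
      (∀ l, l ≤ m1 → psum qflat l = (l : ℝ) * x) ∧
      (∀ l, m1 ≤ l → l ≤ m2 → psum qflat l = psum q l - δ / 2) ∧
      (∀ l, m2 ≤ l → l ≤ k → psum qflat l = 1 - ((k : ℝ) - l) * y) := by
  set A : Finset (Fin k) := univ.filter (fun i => x ≤ q i) with hA
  set C : Finset (Fin k) := univ.filter (fun i => y < q i) with hC
  have hAlow : ∀ i j : Fin k, i ≤ j → j ∈ A → i ∈ A := by
    intro i j hij hj
    simp only [hA, Finset.mem_filter, Finset.mem_univ, true_and] at hj ⊢
    exact le_trans hj (hqa hij)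
  have hClow : ∀ i j : Fin k, i ≤ j → j ∈ C → i ∈ C := by
    intro i j hij hj
    simp only [hC, Finset.mem_filter, Finset.mem_univ, true_and] at hj ⊢
    exact lt_of_lt_of_le hj (hqa hij)
  set m1 := A.card with hm1
  set m2 := C.card with hm2
  have hAmem : ∀ i : Fin k, x ≤ q i ↔ (i : ℕ) < m1 := by
    intro i
    have h := FPM.mem_lower_iff A hAlow i
    simpa [hA] using h
  have hCmem : ∀ i : Fin k, y < q i ↔ (i : ℕ) < m2 := by
    intro i
    have h := FPM.mem_lower_iff C hClow i
    simpa [hC] using h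
  have hAC : A ⊆ C := by
    intro i hi
    simp only [hA, hC, Finset.mem_filter, Finset.mem_univ, true_and] at hi ⊢
    linarith
  have hm12 : m1 ≤ m2 := Finset.card_le_card hAC
  have hm2k : m2 ≤ k := by
    have h := Finset.card_le_card (Finset.subset_univ C)
    simpa [Finset.card_univ] using h
  refine ⟨m1, m2, hm12, hm2k, ?_, ?_, ?_⟩
  · intro l hl
    have hlk : l ≤ k := le_trans hl (le_trans hm12 hm2k)
    rw [psum]
    have hall : ∀ i ∈ univ.filter (fun i : Fin k => (i : ℕ) < l), qflat i = x := by
      intro i hi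
      simp only [Finset.mem_filter] at hi
      rw [hform i, if_pos ((hAmem i).mpr (by omega))]
    rw [Finset.sum_congr rfl hall, Finset.sum_const, FPM.card_filter_lt hlk, nsmul_eq_mul]
  · intro l h1 h2
    have hsub : A ⊆ univ.filter (fun i : Fin k => (i : ℕ) < l) := by
      intro i hi
      simp only [hA, Finset.mem_filter, Finset.mem_univ, true_and] at hi
      simp only [Finset.mem_filter, Finset.mem_univ, true_and]
      have := (hAmem i).mp hi
      omega
    have hzero : ∀ i ∈ univ.filter (fun i : Fin k => (i : ℕ) < l),
        i ∉ A → qflat i - q i = 0 := by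
      intro i hi hni
      simp only [Finset.mem_filter, Finset.mem_univ, true_and] at hi
      have hnx : ¬ x ≤ q i := by
        simpa [hA] using hni
      have hny : ¬ q i ≤ y := by
        rw [not_le]
        apply (hCmem i).mpr
        omega
      rw [hform i, if_neg hnx, if_neg hny]
      ring
    have key : ∑ i ∈ univ.filter (fun i : Fin k => (i : ℕ) < l), (qflat i - q i)
        = ∑ i ∈ A, (qflat i - q i) := (Finset.sum_subset hsub hzero).symm
    have key2 : ∑ i ∈ A, (qflat i - q i) = ∑ i ∈ A, (x - q i) := by
      apply Finset.sum_congr rfl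
      intro i hi
      simp only [hA, Finset.mem_filter, Finset.mem_univ, true_and] at hi
      rw [hform i, if_pos hi]
    have hsA : ∑ i ∈ A, (x - q i) = -(δ/2) := by
      have h' : ∑ i ∈ A, (x - q i) = -∑ i ∈ A, (q i - x) := by
        rw [← Finset.sum_neg_distrib]
        congr 1; funext i; ring
      have h'' : ∑ i ∈ A, (q i - x) = epsFn q x := rfl
      rw [h', h'', hex]
    have hfin : psum qflat l - psum q l = -(δ/2) := by
      rw [psum, psum, ← Finset.sum_sub_distrib, key, key2, hsA]
    linarith
  · intro l h1 h2
    have hsplit : (∑ i, qflat i)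
        = psum qflat l + ∑ i ∈ univ.filter (fun i : Fin k => l ≤ (i : ℕ)), qflat i := by
      rw [psum, ← Finset.sum_filter_add_sum_filter_not univ (fun i : Fin k => (i : ℕ) < l)]
      congr 1
      apply Finset.sum_congr _ (fun _ _ => rfl)
      ext i; simp
    have htail : ∑ i ∈ univ.filter (fun i : Fin k => l ≤ (i : ℕ)), qflat i
        = ((k : ℝ) - l) * y := by
      have hall : ∀ i ∈ univ.filter (fun i : Fin k => l ≤ (i : ℕ)), qflat i = y := by
        intro i hi
        simp only [Finset.mem_filter, Finset.mem_univ, true_and] at hi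
        have hiy : q i ≤ y := by
          by_contra hc
          rw [not_le] at hc
          have := (hCmem i).mp hc
          omega
        have hnx : ¬ x ≤ q i := by
          rw [hAmem i]
          omega
        rw [hform i, if_neg hnx, if_pos hiy]
      rw [Finset.sum_congr rfl hall, Finset.sum_const, FPM.card_filter_le h2, nsmul_eq_mul]
      congr 1
      push_cast [h2]
      ring
    rw [hsumflat, htail] at hsplit
    linarith

end FPMfacts

lemma FPM.epsFn_le_of_psum_le {k : ℕ} {p q : Fin k → ℝ} (hqa : Antitone q)
    (hM : ∀ l, l ≤ k → psum q l ≤ psum p l) (c : ℝ) : epsFn q c ≤ epsFn p c := by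
  set A : Finset (Fin k) := univ.filter (fun i => c ≤ q i) with hA
  have hAlow : ∀ i j : Fin k, i ≤ j → j ∈ A → i ∈ A := by
    intro i j hij hj
    simp only [hA, Finset.mem_filter, Finset.mem_univ, true_and] at hj ⊢
    exact le_trans hj (hqa hij)
  set a := A.card with ha
  have hak : a ≤ k := by
    have h := Finset.card_le_card (Finset.subset_univ A)
    simpa [Finset.card_univ] using h
  have hAeq : A = univ.filter (fun i : Fin k => (i : ℕ) < a) := by
    ext i
    simp only [Finset.mem_filter, Finset.mem_univ, true_and]
    constructor
    · intro hi
      exact (FPM.mem_lower_iff A hAlow i).mp (by simpa [hA] using hi)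
    · intro hi
      have h := (FPM.mem_lower_iff A hAlow i).mpr hi
      simpa [hA] using h
  have e1 : epsFn q c = psum q a - (a : ℝ) * c := by
    rw [epsFn, ← hA, hAeq, Finset.sum_sub_distrib, Finset.sum_const,
      FPM.card_filter_lt hak, nsmul_eq_mul, psum]
  have e2 : psum p a - (a : ℝ) * c
      = ∑ i ∈ univ.filter (fun i : Fin k => (i : ℕ) < a), (p i - c) := by
    rw [psum, Finset.sum_sub_distrib, Finset.sum_const, FPM.card_filter_lt hak, nsmul_eq_mul]
  have e3 : ∑ i ∈ univ.filter (fun i : Fin k => (i : ℕ) < a), (p i - c)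
      ≤ ∑ i ∈ univ.filter (fun i : Fin k => (i : ℕ) < a), max (p i - c) 0 :=
    Finset.sum_le_sum (fun i _ => le_max_left _ _)
  have e4 : ∑ i ∈ univ.filter (fun i : Fin k => (i : ℕ) < a), max (p i - c) 0
      ≤ ∑ i, max (p i - c) 0 :=
    Finset.sum_le_sum_of_subset_of_nonneg (Finset.filter_subset _ _)
      (fun i _ _ => le_max_right _ _)
  rw [e1, FPM.epsFn_eq_sum_max p c]
  have := hM a hak
  linarith

lemma FPM.psum_unif {k : ℕ} {l : ℕ} (hl : l ≤ k) :
    psum (unif k) l = (l : ℝ) * (k : ℝ)⁻¹ := by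
  rw [psum]
  simp only [unif]
  rw [Finset.sum_const, FPM.card_filter_lt hl, nsmul_eq_mul]

lemma FPM.sum_unif {k : ℕ} (hk : 1 ≤ k) : ∑ i, unif k i = 1 := by
  simp only [unif]
  rw [Finset.sum_const, Finset.card_univ, Fintype.card_fin, nsmul_eq_mul]
  have : (k:ℝ) ≠ 0 := by positivity
  field_simp


/-- the flattest `δ`-approximation preserves the majorization order. -/
theorem flattest_preserves_majorization {k : ℕ} (δ : ℝ) (hδ : 0 ≤ δ)
    (p q : Fin k → ℝ) (hp : IsProbDist p) (hq : IsProbDist q)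
    (hpord : Antitone p) (hqord : Antitone q) (hmaj : Majorizes p q)
    (pflat qflat : Fin k → ℝ)
    (hpflat : IsFlattest δ p pflat) (hqflat : IsFlattest δ q qflat) :
    Majorizes pflat qflat := by
  have hMpq : ∀ l, l ≤ k → psum q l ≤ psum p l := by
    intro l hl
    rcases Nat.eq_zero_or_pos l with rfl | hl1
    · rw [FPM.psum_zero, FPM.psum_zero]
    · have h := hmaj.2 l hl1 hl
      rwa [FPM.descSort_eq_self hpord, FPM.descSort_eq_self hqord] at h
  rcases hpflat with ⟨hpu, rfl⟩ | ⟨hpne, xp, yp, hpf⟩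
  · rcases hqflat with ⟨hqu, rfl⟩ | ⟨hqne, xq, yq, hqf⟩
    · exact ⟨rfl, fun l _ _ => le_rfl⟩
    · exfalso
      have hk := FPM.k_pos_of_lt_l1dist hδ hqne
      have h1 : l1dist q (unif k) = 2 * epsFn q (k:ℝ)⁻¹ := by
        rw [FPM.l1dist_unif, ← FPM.eps_eq_gamma_at_unif q hk hq.2]; ring
      have h2 : l1dist p (unif k) = 2 * epsFn p (k:ℝ)⁻¹ := by
        rw [FPM.l1dist_unif, ← FPM.eps_eq_gamma_at_unif p hk hp.2]; ring
      have h3 := FPM.epsFn_le_of_psum_le hqord hMpq ((k:ℝ)⁻¹)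
      rw [h1] at hqne
      rw [h2] at hpu
      linarith
  · obtain ⟨hx01, hy01, hex, hgy, hform⟩ := hpf
    have hk := FPM.k_pos_of_lt_l1dist hδ hpne
    have hyxp := FPM.y_lt_x hδ hp.2 hpne ⟨hx01, hy01, hex, hgy, hform⟩
    have hyx : yp < xp := lt_trans hyxp.1 hyxp.2
    have hpfa : Antitone pflat := FPM.flat_antitone hpord hyx hform
    have hpfs : ∑ i, pflat i = 1 := FPM.flat_sum hyx hp.2 hex hgy hform
    have hplow : ∀ l, psum p l - δ/2 ≤ psum pflat l := FPM.psum_flat_lower hex hform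
    rcases hqflat with ⟨hqu, rfl⟩ | ⟨hqne, xq, yq, hqf⟩
    · refine ⟨?_, ?_⟩
      · rw [hpfs, FPM.sum_unif hk]
      · intro l _ hl
        rw [FPM.descSort_eq_self hpfa,
          FPM.descSort_eq_self (fun (i j : Fin k) (_ : i ≤ j) => le_rfl),
          FPM.psum_unif hl]
        have hch := FPM.concave_chord_k hpfa (Nat.zero_le l) hl
        rw [FPM.psum_zero, FPM.psum_k, hpfs] at hch
        have hkpos : (0:ℝ) < k := by exact_mod_cast hk
        rw [show (l:ℝ) * (k:ℝ)⁻¹ = l / k by ring, div_le_iff₀ hkpos]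
        push_cast at hch
        nlinarith [hch]
    · obtain ⟨hx01q, hy01q, hexq, hgyq, hformq⟩ := hqf
      have hyxq' := FPM.y_lt_x hδ hq.2 hqne ⟨hx01q, hy01q, hexq, hgyq, hformq⟩
      have hyxq : yq < xq := lt_trans hyxq'.1 hyxq'.2
      have hqfa : Antitone qflat := FPM.flat_antitone hqord hyxq hformq
      have hqfs : ∑ i, qflat i = 1 := FPM.flat_sum hyxq hq.2 hexq hgyq hformq
      obtain ⟨m1, m2, hm12, hm2k, hreg1, hreg2, hreg3⟩ :=
        FPM.flat_regions hqord hyxq hqfs hexq hformq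
      have hmid : ∀ j, m1 ≤ j → j ≤ m2 → psum qflat j ≤ psum pflat j := by
        intro j h1 h2
        rw [hreg2 j h1 h2]
        have h3 := hMpq j (le_trans h2 hm2k)
        linarith [hplow j]
      refine ⟨by rw [hpfs, hqfs], ?_⟩
      intro l _ hl
      rw [FPM.descSort_eq_self hpfa, FPM.descSort_eq_self hqfa]
      rcases lt_or_ge l m1 with hcase1 | h1
      · have hqe := hreg1 l (le_of_lt hcase1)
        have hqm1 := hreg1 m1 le_rfl
        have hpm1 := hmid m1 le_rfl hm12
        have hch := FPM.concave_chord_zero hpfa (le_of_lt hcase1) (le_trans hm12 hm2k)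
        have hm1pos : (0:ℝ) < m1 := by
          have : 0 < m1 := by omega
          exact_mod_cast this
        have hlnn : (0:ℝ) ≤ l := Nat.cast_nonneg l
        rw [hqe]
        rw [hqm1] at hpm1
        nlinarith [hch, hpm1, mul_le_mul_of_nonneg_left hpm1 hlnn]
      rcases le_or_gt l m2 with hcase2 | hcase3
      · exact hmid l h1 hcase2
      · have hqe := hreg3 l (le_of_lt hcase3) hl
        have hqm2 := hreg3 m2 le_rfl hm2k
        have hpm2 := hmid m2 hm12 le_rfl
        have hch := FPM.concave_chord_k hpfa (le_of_lt hcase3) hl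
        rw [FPM.psum_k, hpfs] at hch
        have hc1 : (0:ℝ) < (k:ℝ) - m2 := by
          have h' : (m2:ℝ) < k := by exact_mod_cast lt_of_lt_of_le hcase3 hl
          linarith
        have hc2 : (0:ℝ) ≤ (k:ℝ) - l := by
          have h' : (l:ℝ) ≤ k := by exact_mod_cast hl
          linarith
        rw [hqe]
        rw [hqm2] at hpm2
        nlinarith [hch, hpm2, hc1, hc2, mul_le_mul_of_nonneg_left hpm2 hc2]
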